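/- If h is a function in PCSF and R is a relation in PCSF, then both the bounded union over R, f(x,ȳ/ā) = ⋃{h(z,ȳ/ā) : z∈x and R(z,ȳ/ā)}, and the bounded replacement over R, g(x,ȳ/ā) = {h(z,ȳ/ā) : z∈x and R(z,ȳ/ā)}, are in PCSF. -/

import Mathlib

open scoped Classical

noncomputable section

namespace PCSFPaper

/-! ## Basic ZF-set helpers -/

/-- Image `{f z : z ∈ x}` of a ZF-set under an arbitrary class function. -/
noncomputable def zImage (f : ZFSet → ZFSet) (x : ZFSet) : ZFSet :=
  @ZFSet.image f (Classical.allZFSetDefinable fun s => f (s 0)) x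

/-- Kuratowski ordered pair `⟨c,d⟩ = {{c},{c,d}}`. -/
def kpair (c d : ZFSet) : ZFSet := {{c}, {c, d}}

/-! ## Δ₀ formulas of the language of set theory -/

/-- Δ₀ (bounded) formulas in the first-order language of set theory,
with `k` free variables.  In the bounded quantifiers `ball i φ`/`bex i φ`
the newly bound variable (ranging over the elements of variable `i`)
becomes variable `0` of `φ`, the old variables being shifted up by one. -/
inductive D0 : ℕ → Type
  | mem {k : ℕ} (i j : Fin k) : D0 k
  | eq {k : ℕ} (i j : Fin k) : D0 k
  | not {k : ℕ} : D0 k → D0 k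
  | and {k : ℕ} : D0 k → D0 k → D0 k
  | or {k : ℕ} : D0 k → D0 k → D0 k
  | ball {k : ℕ} (i : Fin k) : D0 (k + 1) → D0 k
  | bex {k : ℕ} (i : Fin k) : D0 (k + 1) → D0 k

/-- Satisfaction of Δ₀ formulas in the universe of ZF-sets. -/
def D0.Sat : ∀ {k : ℕ}, D0 k → (Fin k → ZFSet) → Prop
  | _, .mem i j, v => v i ∈ v j
  | _, .eq i j, v => v i = v j
  | _, .not φ, v => ¬ φ.Sat v
  | _, .and φ ψ, v => φ.Sat v ∧ ψ.Sat v
  | _, .or φ ψ, v => φ.Sat v ∨ ψ.Sat v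
  | _, .ball i φ, v => ∀ z ∈ v i, φ.Sat (Fin.cons z v)
  | _, .bex i φ, v => ∃ z ∈ v i, φ.Sat (Fin.cons z v)

/-- A `k`-ary relation on sets is Δ₀ iff it is defined by some Δ₀ formula. -/
def IsDelta0 {k : ℕ} (R : (Fin k → ZFSet) → Prop) : Prop :=
  ∃ φ : D0 k, ∀ v, R v ↔ φ.Sat v

/-! ## The classes PCSF⁻ and PCSF -/

/-- The class `PCSF⁻` of predicatively computable set functions taking only
safe arguments: generated from projections, pairing, null, union and the
membership conditional, by composition and safe separation. -/
inductive PCSFminus : ∀ m : ℕ, ((Fin m → ZFSet) → ZFSet) → Prop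
  | proj {m : ℕ} (j : Fin m) : PCSFminus m fun a => a j
  | pair : PCSFminus 2 fun a => {a 0, a 1}
  | null : PCSFminus 0 fun _ => ∅
  | union : PCSFminus 1 fun a => ZFSet.sUnion (a 0)
  | cond : PCSFminus 4 fun a => if a 2 ∈ a 3 then a 0 else a 1
  | comp {m k : ℕ} (h : (Fin k → ZFSet) → ZFSet) (t : Fin k → (Fin m → ZFSet) → ZFSet) :
      PCSFminus k h → (∀ i, PCSFminus m (t i)) →
      PCSFminus m fun a => h fun i => t i a
  | sep {m : ℕ} (h : (Fin (m + 1) → ZFSet) → ZFSet) :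
      PCSFminus (m + 1) h →
      PCSFminus (m + 1) fun a =>
        ZFSet.sep (fun b => h (Fin.snoc (Fin.init a) b) ≠ ∅) (a (Fin.last m))

/-- The class `PCSF` of predicatively computable set functions, with `n` normal
and `m` safe arguments: generated from `PCSF⁻` (whose arguments are all safe)
and projections by safe composition and predicative set recursion.  The
recursion rule is stated via its defining equation (which determines the
function uniquely, by ∈-induction); the recursion argument `x` is the first
normal argument, and the set `{f(z,ȳ/ā) : z ∈ x}` of previous values is passed
to `h` as a last, safe, argument. -/
inductive PCSF : ∀ n m : ℕ, ((Fin n → ZFSet) → (Fin m → ZFSet) → ZFSet) → Prop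
  | ofMinus {m : ℕ} (h : (Fin m → ZFSet) → ZFSet) :
      PCSFminus m h → PCSF 0 m fun _ a => h a
  | proj {n m : ℕ} (j : Fin (n + m)) : PCSF n m fun x a => Fin.append x a j
  | comp {n m k l : ℕ} (h : (Fin k → ZFSet) → (Fin l → ZFSet) → ZFSet)
      (r : Fin k → (Fin n → ZFSet) → (Fin 0 → ZFSet) → ZFSet)
      (t : Fin l → (Fin n → ZFSet) → (Fin m → ZFSet) → ZFSet) :
      PCSF k l h → (∀ i, PCSF n 0 (r i)) → (∀ i, PCSF n m (t i)) →
      PCSF n m fun x a => h (fun i => r i x Fin.elim0) fun i => t i x a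
  | recur {n m : ℕ} (h : (Fin (n + 1) → ZFSet) → (Fin (m + 1) → ZFSet) → ZFSet)
      (f : (Fin (n + 1) → ZFSet) → (Fin m → ZFSet) → ZFSet) :
      PCSF (n + 1) (m + 1) h →
      (∀ (x : ZFSet) (y : Fin n → ZFSet) (a : Fin m → ZFSet),
        f (Fin.cons x y) a =
          h (Fin.cons x y) (Fin.snoc a (zImage (fun z => f (Fin.cons z y) a) x))) →
      PCSF (n + 1) m f

/-- A relation is in `PCSF` iff its characteristic function
(`1 = {∅}` for true, `0 = ∅` for false) is in `PCSF`. -/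
def PCSFRel (n m : ℕ) (R : (Fin n → ZFSet) → (Fin m → ZFSet) → Prop) : Prop :=
  PCSF n m fun x a => if R x a then ({∅} : ZFSet) else ∅

/-! ## Transitive closure, hereditary finiteness -/

/-- Transitive closure `TC(x) = x ∪ ⋃{TC(y) : y ∈ x}` by ∈-recursion. -/
noncomputable def TCset : ZFSet → ZFSet :=
  ZFSet.mem_wf.fix fun x ih =>
    x ∪ ZFSet.sUnion (zImage (fun y => if h : y ∈ x then ih y h else ∅) x)

/-- A set is hereditarily finite iff its transitive closure is finite. -/
def IsHF (x : ZFSet) : Prop := (TCset x).toSet.Finite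

/-- `cT x` = cardinality of the transitive closure of `x`
(junk value `0` if infinite). -/
noncomputable def cT (x : ZFSet) : ℕ := (TCset x).toSet.ncard

/-- The finite union `A₁ ∪ ⋯ ∪ Aₘ`. -/
def unionFin {m : ℕ} (A : Fin m → ZFSet) : ZFSet :=
  (List.ofFn A).foldr (· ∪ ·) ∅

/-! ## The encoding ν of binary strings, application, product -/

/-- The von Neumann numeral 1 = {∅}. -/
def zOne : ZFSet := {∅}

/-- The von Neumann numeral 2 = {∅,{∅}}. -/
def zTwo : ZFSet := {∅, {∅}}

/-- The encoding of binary strings (head of the list = last appended bit):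
`ν(ε) = ∅` and `ν(s i) = ⟨i+1, ν s⟩`, a bit `i ∈ {0,1}` being represented
by the boolean `i = 1`. -/
def nu : List Bool → ZFSet
  | [] => ∅
  | b :: s => kpair (if b then zTwo else zOne) (nu s)

/-- `zApp b c = b'c = ⋃{d ∈ ⋃⋃b : ⟨c,d⟩ ∈ b}` (which is `⋃{d : ⟨c,d⟩ ∈ b}`,
since every such `d` belongs to `⋃⋃b`). -/
def zApp (b c : ZFSet) : ZFSet :=
  ZFSet.sUnion (ZFSet.sep (fun d => kpair c d ∈ b) (ZFSet.sUnion (ZFSet.sUnion b)))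

/-- Cartesian product `a × b = {⟨u,v⟩ : u ∈ a, v ∈ b}` (with Kuratowski pairs). -/
noncomputable def zProd (a b : ZFSet) : ZFSet :=
  ZFSet.sUnion (zImage (fun u => zImage (fun v => kpair u v) b) a)

/-! ## Polynomial time computability on binary strings -/

/-- The trivial encoding of binary strings over the alphabet `Bool`. -/
def boolListEncoding : Computability.Encoding (List Bool) Bool where
  encode := id
  decode := fun l => some l
  decode_encode := fun _ => rfl

/-- Encoding of a tuple of binary strings over the alphabet `Option Bool`:
the strings are listed in order, each terminated by the separator `none`. -/
def encTuple : (k : ℕ) → (Fin k → List Bool) → List (Option Bool)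
  | 0, _ => []
  | k + 1, v => (v 0).map some ++ none :: encTuple k (Fin.tail v)

/-- Splits off the first separator-terminated block. -/
def splitFirst : List (Option Bool) → List Bool × List (Option Bool)
  | [] => ([], [])
  | none :: l => ([], l)
  | some b :: l => ((splitFirst l).1.cons b, (splitFirst l).2)

theorem splitFirst_encode (s : List Bool) (rest : List (Option Bool)) :
    splitFirst (s.map some ++ none :: rest) = (s, rest) := by
  induction s with
  | nil => rfl
  | cons b s ih => simp [splitFirst, ih]

/-- Decoding of tuples of binary strings. -/
def decTuple : (k : ℕ) → List (Option Bool) → Option (Fin k → List Bool)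
  | 0, _ => some Fin.elim0
  | k + 1, l =>
    (decTuple k (splitFirst l).2).map fun v => Fin.cons (splitFirst l).1 v

theorem decTuple_encTuple : ∀ (k : ℕ) (v : Fin k → List Bool),
    decTuple k (encTuple k v) = some v := by
  intro k
  induction k with
  | zero =>
    intro v
    simp only [decTuple]
    congr
    exact funext fun i => i.elim0
  | succ k ih =>
    intro v
    simp [decTuple, encTuple, splitFirst_encode, ih (Fin.tail v), Fin.cons_self_tail]

/-- The standard encoding of tuples of binary strings. -/
def tupleEncoding (k : ℕ) : Computability.Encoding (Fin k → List Bool) (Option Bool) where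
  encode := encTuple k
  decode := decTuple k
  decode_encode := decTuple_encTuple k

/-- A function on tuples of binary strings is polynomial time computable iff
some two-stack machine computes it in polynomial time (Mathlib's notion). -/
def PolyTimeStringFun {k : ℕ} (f : (Fin k → List Bool) → List Bool) : Prop :=
  Nonempty (Turing.TM2ComputableInPolyTime (tupleEncoding k).encode boolListEncoding.encode f)

/-- Polynomial time computability for functions on ℕ,
with respect to the standard binary encoding of naturals. -/
def PolyTimeNatFun (f : ℕ → ℕ) : Prop :=
  Nonempty (Turing.TM2ComputableInPolyTime Computability.encodingNatBool.encode
    Computability.encodingNatBool.encode f)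

/-! ## A feasible encoding of lists of naturals by naturals -/

/-- Reads a list of bits (least significant first) as a natural number. -/
def bitsToNat (l : List Bool) : ℕ := l.foldr (fun b n => Nat.bit b n) 0

/-- A standard feasible (linear size) encoding of lists of natural numbers:
every bit of the binary expansion of an entry is escaped as `[false, b]`,
entries are terminated by `[true, true]`, and a final `true` protects
leading zeros. -/
def encodeNatList (l : List ℕ) : ℕ :=
  bitsToNat
    ((l.map fun n => (Nat.bits n).foldr (fun b acc => false :: b :: acc) [true, true]).foldr
        (· ++ ·) [true])

/-! ## Rooted DAGs encoding hereditarily finite sets -/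

/-- A rooted DAG: a finite set `V` of natural numbers, edges `E ⊆ V × V`
going strictly downwards, and a root `r ∈ V` which is the only node of
indegree zero. -/
structure RootedDag where
  V : Finset ℕ
  E : Finset (ℕ × ℕ)
  r : ℕ
  edge_mem : ∀ e ∈ E, e.1 ∈ V ∧ e.2 ∈ V
  root_mem : r ∈ V
  root_indeg : ∀ e ∈ E, e.2 ≠ r
  reach_nonroot : ∀ a ∈ V, a ≠ r → ∃ b ∈ V, (b, a) ∈ E
  desc : ∀ e ∈ E, e.2 < e.1

namespace RootedDag

/-- The children of a node. -/
def children (G : RootedDag) (a : ℕ) : Finset ℕ :=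
  (G.E.filter fun e => e.1 = a).image Prod.snd

theorem children_lt (G : RootedDag) {a b : ℕ} (h : b ∈ G.children a) : b < a := by
  simp only [children, Finset.mem_image, Finset.mem_filter] at h
  obtain ⟨e, ⟨heE, he1⟩, he2⟩ := h
  have := G.desc e heE
  omega

/-- The hereditarily finite set encoded at a node:
`set_G(a) = {set_G(b) : (a,b) ∈ E}`. -/
def setAt (G : RootedDag) (a : ℕ) : ZFSet.{0} :=
  (((G.children a).attach.toList).map fun b => G.setAt b.1).foldr insert ∅
termination_by a
decreasing_by exact G.children_lt b.2

/-- The hereditarily finite set encoded by a rooted DAG. -/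
def set (G : RootedDag) : ZFSet.{0} := G.setAt G.r

/-- A DAG is fully collapsed iff distinct nodes encode distinct sets. -/
def FullyCollapsed (G : RootedDag) : Prop :=
  ∀ a ∈ G.V, ∀ b ∈ G.V, G.setAt a = G.setAt b → a = b

/-- Reachability along edges. -/
def Reaches (G : RootedDag) (a b : ℕ) : Prop :=
  Relation.ReflTransGen (fun u v => (u, v) ∈ G.E) a b

/-- The node set of the sub-DAG `G|a` of nodes reachable from `a`. -/
noncomputable def reachSet (G : RootedDag) (a : ℕ) : Finset ℕ :=
  G.V.filter fun b => G.Reaches a b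

/-- A DAG is balanced iff each node `a` is at most the number of nodes of `G|a`. -/
def Balanced (G : RootedDag) : Prop :=
  ∀ a ∈ G.V, a ≤ (G.reachSet a).card

end RootedDag

/-- The numeric code `⌈G⌉` of a rooted DAG: the code of the triple consisting
of (the code of) the sorted list of vertices, (the code of) the sorted list of
pair-coded edges, and the root. -/
noncomputable def RootedDag.code (G : RootedDag) : ℕ :=
  encodeNatList [encodeNatList (G.V.sort (· ≤ ·)),
    encodeNatList ((G.E.image fun e => Nat.pair e.1 e.2).sort (· ≤ ·)), G.r]

/-- The finite set `{l₀, …, l_{n-1}}` as a ZF-set. -/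
def zSetOfList (l : List ZFSet) : ZFSet := l.foldr insert ∅

/-! ### Auxiliary machinery for Statement 9 -/

section Stmt9Aux

theorem mem_zImage {f : ZFSet → ZFSet} {x y : ZFSet} :
    y ∈ zImage f x ↔ ∃ z ∈ x, f z = y := by
  simpa [zImage] using
    @ZFSet.mem_image f ⟨(Classical.allZFSetDefinable fun s => f (s 0)).out, fun _ => by
      exact (Classical.allZFSetDefinable fun s => f (s 0)).out_equiv _⟩ x y

theorem zImage_congr {f g : ZFSet → ZFSet} {x : ZFSet} (h : ∀ z ∈ x, f z = g z) :
    zImage f x = zImage g x := by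
  apply ZFSet.ext
  intro w
  simp only [mem_zImage]
  constructor
  · rintro ⟨z, hz, rfl⟩; exact ⟨z, hz, (h z hz).symm⟩
  · rintro ⟨z, hz, rfl⟩; exact ⟨z, hz, h z hz⟩

theorem kpair_injective : Function.Injective2 kpair := ZFSet.pair_injective

theorem ite_one_ne {P : Prop} : ((if P then ({∅} : ZFSet) else ∅) ≠ ∅) ↔ P := by
  have h1 : ({∅} : ZFSet) ≠ ∅ := by
    intro h
    have h2 : (∅ : ZFSet) ∈ ({∅} : ZFSet) := ZFSet.mem_singleton.2 rfl
    rw [h] at h2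
    exact ZFSet.notMem_empty _ h2
  split_ifs with hp
  · exact iff_of_true h1 hp
  · exact iff_of_false (by simp) hp

theorem zfset_ne_empty {u : ZFSet} : u ≠ ∅ ↔ ∃ e, e ∈ u := by
  rw [Ne, ZFSet.eq_empty u]
  push_neg
  rfl

/-! #### PCSF⁻ combinators -/

theorem pm_ext {m : ℕ} {f g : (Fin m → ZFSet) → ZFSet} (hf : PCSFminus m f)
    (h : ∀ a, f a = g a) : PCSFminus m g := (funext h : f = g) ▸ hf

theorem pm_comp' {m l : ℕ} {Φ : (Fin l → ZFSet) → ZFSet}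
    (hΦ : PCSFminus l Φ) {t : Fin l → (Fin m → ZFSet) → ZFSet}
    (ht : ∀ i, PCSFminus m (t i)) :
    PCSFminus m (fun a => Φ fun i => t i a) :=
  PCSFminus.comp Φ t hΦ ht

theorem pm_null {m : ℕ} : PCSFminus m (fun _ => ∅) :=
  pm_ext (pm_comp' .null (t := Fin.elim0) (fun i => i.elim0)) fun _ => rfl

theorem pm_pair {m : ℕ} {f g : (Fin m → ZFSet) → ZFSet} (hf : PCSFminus m f)
    (hg : PCSFminus m g) : PCSFminus m (fun a => ({f a, g a} : ZFSet)) := by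
  apply pm_ext (pm_comp' .pair (t := ![f, g]) ?_)
  · intro a; rfl
  · intro i; fin_cases i <;> assumption

theorem pm_singleton {m : ℕ} {f : (Fin m → ZFSet) → ZFSet} (hf : PCSFminus m f) :
    PCSFminus m (fun a => ({f a} : ZFSet)) := by
  apply pm_ext (pm_pair hf hf)
  intro a
  apply ZFSet.ext; intro w; simp [ZFSet.mem_insert_iff]

theorem pm_one {m : ℕ} : PCSFminus m (fun _ => ({∅} : ZFSet)) :=
  pm_singleton pm_null

theorem pm_kpair {m : ℕ} {f g : (Fin m → ZFSet) → ZFSet} (hf : PCSFminus m f)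
    (hg : PCSFminus m g) : PCSFminus m (fun a => kpair (f a) (g a)) :=
  pm_pair (pm_singleton hf) (pm_pair hf hg)

theorem pm_union {m : ℕ} {f : (Fin m → ZFSet) → ZFSet} (hf : PCSFminus m f) :
    PCSFminus m (fun a => ZFSet.sUnion (f a)) := by
  apply pm_ext (pm_comp' .union (t := ![f]) ?_)
  · intro a; rfl
  · intro i; fin_cases i; assumption

theorem pm_binunion {m : ℕ} {f g : (Fin m → ZFSet) → ZFSet} (hf : PCSFminus m f)
    (hg : PCSFminus m g) : PCSFminus m (fun a => f a ∪ g a) := by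
  apply pm_ext (pm_union (pm_pair hf hg))
  intro a
  exact ZFSet.sUnion_pair _ _

theorem pm_cond {m : ℕ} {f g c d : (Fin m → ZFSet) → ZFSet} (hf : PCSFminus m f)
    (hg : PCSFminus m g) (hc : PCSFminus m c) (hd : PCSFminus m d) :
    PCSFminus m (fun a => if c a ∈ d a then f a else g a) := by
  apply pm_ext (pm_comp' .cond (t := ![f, g, c, d]) ?_)
  · intro a; rfl
  · intro i; fin_cases i <;> assumption

theorem pm_sep {m : ℕ} {H : (Fin (m + 1) → ZFSet) → ZFSet} {s : (Fin m → ZFSet) → ZFSet}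
    (hH : PCSFminus (m + 1) H) (hs : PCSFminus m s) :
    PCSFminus m (fun a => ZFSet.sep (fun b => H (Fin.snoc a b) ≠ ∅) (s a)) := by
  have base := PCSFminus.sep H hH
  apply pm_ext (pm_comp' base (t := Fin.snoc (fun j a => a j) s) ?_)
  · intro a
    have h1 : (fun i => Fin.snoc (α := fun _ => (Fin m → ZFSet) → ZFSet)
        (fun j a => a j) s i a) = Fin.snoc a (s a) := by
      funext i
      refine Fin.lastCases ?_ (fun j => ?_) i <;> simp
    rw [h1]
    simp [Fin.init_snoc]
  · intro i
    refine Fin.lastCases ?_ (fun j => ?_) i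
    · simpa using hs
    · simpa using PCSFminus.proj (m := m) j

theorem zsep_congr {p q : ZFSet → Prop} (hpq : ∀ b, p b ↔ q b) (x : ZFSet) :
    ZFSet.sep p x = ZFSet.sep q x :=
  ZFSet.ext fun w => by rw [ZFSet.mem_sep, ZFSet.mem_sep, hpq w]

/-! #### PCSF combinators -/

theorem pc_ext {n m : ℕ} {f g : (Fin n → ZFSet) → (Fin m → ZFSet) → ZFSet}
    (hf : PCSF n m f) (h : ∀ x a, f x a = g x a) : PCSF n m g :=
  (funext fun x => funext fun a => h x a : f = g) ▸ hf

theorem pc_comp' {n m l : ℕ} {Φ : (Fin l → ZFSet) → ZFSet} (hΦ : PCSFminus l Φ)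
    {t : Fin l → (Fin n → ZFSet) → (Fin m → ZFSet) → ZFSet} (ht : ∀ i, PCSF n m (t i)) :
    PCSF n m (fun x a => Φ fun i => t i x a) :=
  PCSF.comp (fun _ a => Φ a) (fun i => i.elim0) t (.ofMinus Φ hΦ) (fun i => i.elim0) ht

theorem pc_proj_normal {n m : ℕ} (j : Fin n) : PCSF n m (fun x _ => x j) :=
  pc_ext (.proj (Fin.castAdd m j)) fun x a => Fin.append_left x a j

theorem pc_proj_safe {n m : ℕ} (j : Fin m) : PCSF n m (fun _ a => a j) :=
  pc_ext (.proj (Fin.natAdd n j)) fun x a => Fin.append_right x a j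

theorem pc_liftSafe {n m : ℕ} {f : (Fin n → ZFSet) → (Fin m → ZFSet) → ZFSet}
    (hf : PCSF n m f) : PCSF n (m + 1) (fun x a => f x (Fin.init a)) :=
  PCSF.comp f (fun i x _ => x i) (fun i x a => a (Fin.castSucc i)) hf
    (fun i => pc_proj_normal i) (fun i => pc_proj_safe (Fin.castSucc i))

/-! #### The auxiliary recursion function -/

variable {n m : ℕ} (h : (Fin (n + 1) → ZFSet) → (Fin m → ZFSet) → ZFSet)
  (R : (Fin (n + 1) → ZFSet) → (Fin m → ZFSet) → Prop)

/-- `Fdef y a x = {⟨z, h(z,y/a)⟩ : z ∈ TC({x}), R(z,y/a)}`, by ∈-recursion. -/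
noncomputable def Fdef (y : Fin n → ZFSet) (a : Fin m → ZFSet) : ZFSet → ZFSet :=
  ZFSet.mem_wf.fix fun x ih =>
    (if R (Fin.cons x y) a then ({kpair x (h (Fin.cons x y) a)} : ZFSet) else ∅) ∪
      ZFSet.sUnion (zImage (fun z => if hz : z ∈ x then ih z hz else ∅) x)

theorem Fdef_eq (y : Fin n → ZFSet) (a : Fin m → ZFSet) (x : ZFSet) :
    Fdef h R y a x =
      (if R (Fin.cons x y) a then ({kpair x (h (Fin.cons x y) a)} : ZFSet) else ∅) ∪
        ZFSet.sUnion (zImage (Fdef h R y a) x) := by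
  unfold Fdef
  rw [WellFounded.fix_eq]
  congr 1
  apply congrArg
  apply zImage_congr
  intro z hz
  simp [hz]

theorem mem_Fdef_of {y : Fin n → ZFSet} {a : Fin m → ZFSet} {x z : ZFSet} (hz : z ∈ x)
    (hr : R (Fin.cons z y) a) : kpair z (h (Fin.cons z y) a) ∈ Fdef h R y a x := by
  rw [Fdef_eq]
  apply ZFSet.mem_union.2
  right
  apply ZFSet.mem_sUnion.2
  refine ⟨Fdef h R y a z, mem_zImage.2 ⟨z, hz, rfl⟩, ?_⟩
  rw [Fdef_eq]
  apply ZFSet.mem_union.2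
  left
  rw [if_pos hr]
  exact ZFSet.mem_singleton.2 rfl

theorem Fdef_elim {y : Fin n → ZFSet} {a : Fin m → ZFSet} (x : ZFSet) :
    ∀ e ∈ Fdef h R y a x,
      ∃ z, R (Fin.cons z y) a ∧ e = kpair z (h (Fin.cons z y) a) := by
  induction x using ZFSet.inductionOn with
  | h x IH =>
    intro e he
    rw [Fdef_eq] at he
    rcases ZFSet.mem_union.1 he with h1 | h2
    · split_ifs at h1 with hr
      · exact ⟨x, hr, ZFSet.mem_singleton.1 h1⟩
      · exact absurd h1 (ZFSet.notMem_empty e)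
    · rcases ZFSet.mem_sUnion.1 h2 with ⟨u, hu, heu⟩
      rcases mem_zImage.1 hu with ⟨z, hzx, rfl⟩
      exact IH z hzx e heu

theorem Fdef_main_eq (x : Fin (n + 1) → ZFSet) (a : Fin m → ZFSet) :
    ZFSet.sep
        (fun d => ZFSet.sep (fun z => kpair z d ∈ Fdef h R (Fin.tail x) a (x 0)) (x 0) ≠ ∅)
        (ZFSet.sUnion (ZFSet.sUnion (Fdef h R (Fin.tail x) a (x 0)))) =
      zImage (fun z => h (Fin.cons z (Fin.tail x)) a)
        (ZFSet.sep (fun z => R (Fin.cons z (Fin.tail x)) a) (x 0)) := by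
  apply ZFSet.ext
  intro d
  rw [ZFSet.mem_sep, mem_zImage]
  constructor
  · rintro ⟨-, hne⟩
    rcases zfset_ne_empty.1 hne with ⟨z, hz⟩
    rcases ZFSet.mem_sep.1 hz with ⟨hz0, hpair⟩
    rcases Fdef_elim h R (x 0) _ hpair with ⟨w, hw, heq⟩
    obtain ⟨rfl, rfl⟩ := kpair_injective heq
    exact ⟨z, ZFSet.mem_sep.2 ⟨hz0, hw⟩, rfl⟩
  · rintro ⟨z, hz, rfl⟩
    rcases ZFSet.mem_sep.1 hz with ⟨hz0, hr⟩
    have hpair : kpair z (h (Fin.cons z (Fin.tail x)) a) ∈ Fdef h R (Fin.tail x) a (x 0) :=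
      mem_Fdef_of h R hz0 hr
    constructor
    · apply ZFSet.mem_sUnion.2
      refine ⟨{z, h (Fin.cons z (Fin.tail x)) a}, ?_, ?_⟩
      · apply ZFSet.mem_sUnion.2
        refine ⟨kpair z (h (Fin.cons z (Fin.tail x)) a), hpair, ?_⟩
        simp [kpair, ZFSet.mem_insert_iff]
      · simp [ZFSet.mem_insert_iff]
    · exact zfset_ne_empty.2 ⟨z, ZFSet.mem_sep.2 ⟨hz0, hpair⟩⟩

theorem pcsf_Fdef (hh : PCSF (n + 1) m h) (hR : PCSFRel (n + 1) m R) :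
    PCSF (n + 1) m (fun x a => Fdef h R (Fin.tail x) a (x 0)) := by
  have hΦ : PCSFminus 4 (fun a =>
      (if (∅ : ZFSet) ∈ a 1 then ({kpair (a 0) (a 2)} : ZFSet) else ∅) ∪
        ZFSet.sUnion (a 3)) :=
    pm_binunion
      (pm_cond (pm_singleton (pm_kpair (.proj 0) (.proj 2))) pm_null pm_null (.proj 1))
      (pm_union (.proj 3))
  have hH : PCSF (n + 1) (m + 1) (fun x a' =>
      (if (∅ : ZFSet) ∈ (if R x (Fin.init a') then ({∅} : ZFSet) else ∅) then
          ({kpair (x 0) (h x (Fin.init a'))} : ZFSet) else ∅) ∪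
        ZFSet.sUnion (a' (Fin.last m))) := by
    have := pc_comp' hΦ
      (t := ![fun x _ => x 0, fun x a' => if R x (Fin.init a') then ({∅} : ZFSet) else ∅,
        fun x a' => h x (Fin.init a'), fun _ a' => a' (Fin.last m)])
      (fun i => by
        fin_cases i
        · exact pc_proj_normal 0
        · exact pc_liftSafe hR
        · exact pc_liftSafe hh
        · exact pc_proj_safe (Fin.last m))
    exact this
  refine PCSF.recur _ _ hH ?_
  intro x y a
  simp only [Fin.tail_cons, Fin.cons_zero, Fin.init_snoc, Fin.snoc_last]
  rw [Fdef_eq]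
  by_cases hr : R (Fin.cons x y) a <;>
    simp [hr, ZFSet.mem_singleton, ZFSet.notMem_empty]

/-- The PCSF⁻ function extracting the result set from `Fdef`. -/
theorem pcsf_Gm : PCSFminus 2 (fun a =>
    ZFSet.sep (fun d => ZFSet.sep (fun z => kpair z d ∈ a 1) (a 0) ≠ ∅)
      (ZFSet.sUnion (ZFSet.sUnion (a 1)))) := by
  have h4 : PCSFminus 4 (fun a =>
      if kpair (a 3) (a 2) ∈ a 1 then ({∅} : ZFSet) else ∅) :=
    pm_cond pm_one pm_null (pm_kpair (.proj 3) (.proj 2)) (.proj 1)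
  have inner3 : PCSFminus 3 (fun a => ZFSet.sep (fun z => kpair z (a 2) ∈ a 1) (a 0)) := by
    apply pm_ext (pm_sep h4 (.proj 0))
    intro a
    apply zsep_congr
    intro b
    rw [ite_one_ne]
    have e3 : (Fin.snoc a b : Fin 4 → ZFSet) 3 = b := by
      simp [Fin.snoc]; try (intro hlt; exact absurd hlt (by decide))
    have e2 : (Fin.snoc a b : Fin 4 → ZFSet) 2 = a 2 := by simp [Fin.snoc]; try rfl
    have e1 : (Fin.snoc a b : Fin 4 → ZFSet) 1 = a 1 := by simp [Fin.snoc]; try rfl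
    rw [e3, e2, e1]
  apply pm_ext (pm_sep inner3 (pm_union (pm_union (.proj 1))))
  intro a
  apply zsep_congr
  intro d
  have e2 : (Fin.snoc a d : Fin 3 → ZFSet) 2 = d := by
    simp [Fin.snoc]; try (intro hlt; exact absurd hlt (by decide))
  have e1 : (Fin.snoc a d : Fin 3 → ZFSet) 1 = a 1 := by simp [Fin.snoc]; try rfl
  have e0 : (Fin.snoc a d : Fin 3 → ZFSet) 0 = a 0 := by simp [Fin.snoc]; try rfl
  rw [e2, e1, e0]

end Stmt9Aux

/-- Bounded union and bounded replacement over a `PCSF`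
relation: `f(x,ȳ/ā) = ⋃{h(z,ȳ/ā) : z ∈ x, R(z,ȳ/ā)}` and
`g(x,ȳ/ā) = {h(z,ȳ/ā) : z ∈ x, R(z,ȳ/ā)}` are in `PCSF`. -/
theorem pcsf_bounded_union_sep {n m : ℕ}
    (h : (Fin (n + 1) → ZFSet) → (Fin m → ZFSet) → ZFSet)
    (R : (Fin (n + 1) → ZFSet) → (Fin m → ZFSet) → Prop)
    (hh : PCSF (n + 1) m h) (hR : PCSFRel (n + 1) m R) :
    PCSF (n + 1) m (fun x a =>
      ZFSet.sUnion (zImage (fun z => h (Fin.cons z (Fin.tail x)) a)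
        (ZFSet.sep (fun z => R (Fin.cons z (Fin.tail x)) a) (x 0)))) ∧
    PCSF (n + 1) m (fun x a =>
      zImage (fun z => h (Fin.cons z (Fin.tail x)) a)
        (ZFSet.sep (fun z => R (Fin.cons z (Fin.tail x)) a) (x 0))) := by
  have hFd := pcsf_Fdef h R hh hR
  have hg : PCSF (n + 1) m (fun x a =>
      zImage (fun z => h (Fin.cons z (Fin.tail x)) a)
        (ZFSet.sep (fun z => R (Fin.cons z (Fin.tail x)) a) (x 0))) := by
    have hc := pc_comp' pcsf_Gm
      (t := ![fun x _ => x 0, fun x a => Fdef h R (Fin.tail x) a (x 0)])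
      (fun i => by
        fin_cases i
        · exact pc_proj_normal 0
        · exact hFd)
    apply pc_ext hc
    intro x a
    exact Fdef_main_eq h R x a
  refine ⟨?_, hg⟩
  have hu := pc_comp' (pm_union (.proj 0))
    (t := ![fun x a =>
      zImage (fun z => h (Fin.cons z (Fin.tail x)) a)
        (ZFSet.sep (fun z => R (Fin.cons z (Fin.tail x)) a) (x 0))])
    (fun i => by fin_cases i; exact hg)
  exact pc_ext hu fun x a => rfl

end PCSFPaper
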